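/- (Deterministic core of Theorem 1.) Let X and A be nonempty finite sets, T ≥ 1, r, f_r : X × A → ℝ, and L₁ > 0 with (1/L₁)(r*(x) − r(x, a)) ≤ f_r*(x) − f_r(x, a) for all x, a, where r*(x) = max_a r(x, a) and f_r*(x) = max_a f_r(x, a). For each t ∈ {1, …, T}, let μ_t : X × A → ℝ, σ_t : X × A → ℝ with σ_t ≥ 0 pointwise, and let 0 ≤ β₁ ≤ … ≤ β_T satisfy |μ_t(x, a) − f_r(x, a)| ≤ β_t σ_t(x, a) for all t, x, a. Define U_t = μ_t + β_t σ_t and L_t = μ_t − β_t σ_t; let x_t ∈ argmax_{x ∈ X} (max_{a} U_t(x, a) − max_{a} L_t(x, a)), a_t ∈ argmax_{a} U_t(x_t, a), and let the output policy be π̂(x) ∈ argmax_{a ∈ A} max_{t ∈ {1,…,T}} L_t(x, a). Then SubOpt(π̂) = max_{x ∈ X} (r*(x) − r(x, π̂(x))) ≤ (2 L₁ β_T/√T) · √(∑_{t=1}^T σ_t(x_t, a_t)²). -/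

import Mathlib

/-- deterministic core of Theorem 1: Under Assumption 2, valid confidence
bounds `|μ_t - f_r| ≤ β_t σ_t` with nonnegative `σ_t` and nonnegative nondecreasing `β_t`,
the AE-Borda context/action selection rule and pessimistic output policy `π̂` satisfy
`SubOpt(π̂) ≤ (2 L₁ β_T / √T) √(∑_t σ_t(x_t, a_t)²)`. -/
theorem ae_borda_suboptimality_bound
    {X A : Type*} [Fintype X] [Nonempty X] [Fintype A] [Nonempty A]
    (T : ℕ) (hT : 1 ≤ T) (r f : X → A → ℝ) (L₁ : ℝ) (hL : 0 < L₁)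
    (hass : ∀ x a, (1 / L₁) * (Finset.univ.sup' Finset.univ_nonempty (r x) - r x a)
      ≤ Finset.univ.sup' Finset.univ_nonempty (f x) - f x a)
    (μ σ : ℕ → X → A → ℝ) (β : ℕ → ℝ)
    (hσ : ∀ t ∈ Finset.Icc 1 T, ∀ x a, 0 ≤ σ t x a)
    (hβ0 : ∀ t ∈ Finset.Icc 1 T, 0 ≤ β t)
    (hβmono : ∀ t₁ t₂, 1 ≤ t₁ → t₁ ≤ t₂ → t₂ ≤ T → β t₁ ≤ β t₂)
    (hconf : ∀ t ∈ Finset.Icc 1 T, ∀ x a, |μ t x a - f x a| ≤ β t * σ t x a)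
    (xt : ℕ → X) (att : ℕ → A)
    -- context selection: `x_t` maximizes the gap between optimistic and pessimistic values
    (hxt : ∀ t ∈ Finset.Icc 1 T, ∀ x,
      Finset.univ.sup' Finset.univ_nonempty (fun a => μ t x a + β t * σ t x a)
        - Finset.univ.sup' Finset.univ_nonempty (fun a => μ t x a - β t * σ t x a)
      ≤ Finset.univ.sup' Finset.univ_nonempty (fun a => μ t (xt t) a + β t * σ t (xt t) a)
        - Finset.univ.sup' Finset.univ_nonempty (fun a => μ t (xt t) a - β t * σ t (xt t) a))
    -- action selection: `a_t` maximizes the upper confidence bound at `x_t`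
    (hat : ∀ t ∈ Finset.Icc 1 T, ∀ a,
      μ t (xt t) a + β t * σ t (xt t) a ≤ μ t (xt t) (att t) + β t * σ t (xt t) (att t))
    (π : X → A)
    -- output policy: `π̂(x)` maximizes `a ↦ max_t L_t(x, a)`
    (hπ : ∀ x a, (Finset.Icc 1 T).sup' ⟨1, Finset.mem_Icc.mpr ⟨le_rfl, hT⟩⟩
        (fun t => μ t x a - β t * σ t x a)
      ≤ (Finset.Icc 1 T).sup' ⟨1, Finset.mem_Icc.mpr ⟨le_rfl, hT⟩⟩
        (fun t => μ t x (π x) - β t * σ t x (π x))) :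
    Finset.univ.sup' Finset.univ_nonempty
        (fun x => Finset.univ.sup' Finset.univ_nonempty (r x) - r x (π x))
      ≤ (2 * L₁ * β T / Real.sqrt T) *
        Real.sqrt (∑ t ∈ Finset.Icc 1 T, σ t (xt t) (att t) ^ 2) := by
  classical
  have hTmem : T ∈ Finset.Icc 1 T := Finset.mem_Icc.mpr ⟨hT, le_rfl⟩
  have hTne : (Finset.Icc 1 T).Nonempty := ⟨1, Finset.mem_Icc.mpr ⟨le_rfl, hT⟩⟩
  set S := Real.sqrt (∑ t ∈ Finset.Icc 1 T, σ t (xt t) (att t) ^ 2) with hS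
  have hS0 : 0 ≤ S := Real.sqrt_nonneg _
  have hβT : 0 ≤ β T := hβ0 T hTmem
  have hTpos : (0:ℝ) < (T:ℝ) := by exact_mod_cast hT
  have hsqTpos : 0 < Real.sqrt T := Real.sqrt_pos.mpr hTpos
  have hLf : ∀ t ∈ Finset.Icc 1 T, ∀ x a, μ t x a - β t * σ t x a ≤ f x a := by
    intro t ht x a
    have h := abs_le.mp (hconf t ht x a)
    linarith [h.1, h.2]
  have hfU : ∀ t ∈ Finset.Icc 1 T, ∀ x a, f x a ≤ μ t x a + β t * σ t x a := by
    intro t ht x a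
    have h := abs_le.mp (hconf t ht x a)
    linarith [h.1, h.2]
  -- per time-step bound on the Borda gap
  have key : ∀ x, ∀ t ∈ Finset.Icc 1 T,
      Finset.univ.sup' Finset.univ_nonempty (f x) - f x (π x)
        ≤ 2 * β T * σ t (xt t) (att t) := by
    intro x t ht
    obtain ⟨ht1, htT⟩ := Finset.mem_Icc.mp ht
    -- lower bound on f x (π x)
    have hfπ : Finset.univ.sup' Finset.univ_nonempty (fun a => μ t x a - β t * σ t x a)
        ≤ f x (π x) := by
      apply Finset.sup'_le
      intro a _
      have h1 : μ t x a - β t * σ t x a ≤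
          (Finset.Icc 1 T).sup' hTne (fun s => μ s x a - β s * σ s x a) :=
        Finset.le_sup' (fun s => μ s x a - β s * σ s x a) ht
      have h2 := hπ x a
      have h3 : (Finset.Icc 1 T).sup' hTne (fun s => μ s x (π x) - β s * σ s x (π x))
          ≤ f x (π x) := Finset.sup'_le _ _ (fun s hs => hLf s hs x (π x))
      calc μ t x a - β t * σ t x a ≤ _ := h1
        _ ≤ _ := h2
        _ ≤ f x (π x) := h3
    have hfstar : Finset.univ.sup' Finset.univ_nonempty (f x)
        ≤ Finset.univ.sup' Finset.univ_nonempty (fun a => μ t x a + β t * σ t x a) := by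
      apply Finset.sup'_le
      intro a _
      exact le_trans (hfU t ht x a) (Finset.le_sup' (fun a => μ t x a + β t * σ t x a) (Finset.mem_univ a))
    have hgap := hxt t ht x
    have hUat : Finset.univ.sup' Finset.univ_nonempty
        (fun a => μ t (xt t) a + β t * σ t (xt t) a)
        ≤ μ t (xt t) (att t) + β t * σ t (xt t) (att t) :=
      Finset.sup'_le _ _ (fun a _ => hat t ht a)
    have hLat : μ t (xt t) (att t) - β t * σ t (xt t) (att t)
        ≤ Finset.univ.sup' Finset.univ_nonempty
          (fun a => μ t (xt t) a - β t * σ t (xt t) a) :=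
      Finset.le_sup' (fun a => μ t (xt t) a - β t * σ t (xt t) a) (Finset.mem_univ (att t))
    have hβt : β t ≤ β T := hβmono t T ht1 htT le_rfl
    have hσt : 0 ≤ σ t (xt t) (att t) := hσ t ht (xt t) (att t)
    nlinarith [mul_le_mul_of_nonneg_right hβt hσt]
  -- sum over t
  have hsum : ∀ x,
      (T:ℝ) * (Finset.univ.sup' Finset.univ_nonempty (f x) - f x (π x))
        ≤ 2 * β T * ∑ t ∈ Finset.Icc 1 T, σ t (xt t) (att t) := by
    intro x
    have := Finset.sum_le_sum (fun t ht => key x t ht)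
    simp only [Finset.sum_const, Nat.card_Icc, Nat.add_sub_cancel, nsmul_eq_mul,
      ← Finset.mul_sum] at this ⊢
    exact this
  -- Cauchy–Schwarz
  have hCS : ∑ t ∈ Finset.Icc 1 T, σ t (xt t) (att t) ≤ Real.sqrt T * S := by
    have h1 : (∑ t ∈ Finset.Icc 1 T, σ t (xt t) (att t)) ^ 2
        ≤ (Finset.Icc 1 T).card * ∑ t ∈ Finset.Icc 1 T, σ t (xt t) (att t) ^ 2 :=
      sq_sum_le_card_mul_sum_sq
    have hcard : ((Finset.Icc 1 T).card : ℝ) = (T:ℝ) := by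
      simp [Nat.card_Icc]
    rw [hcard] at h1
    have h2 : 0 ≤ ∑ t ∈ Finset.Icc 1 T, σ t (xt t) (att t) :=
      Finset.sum_nonneg (fun t ht => hσ t ht _ _)
    have h3 := Real.sqrt_le_sqrt h1
    rw [Real.sqrt_sq h2, Real.sqrt_mul (le_of_lt hTpos)] at h3
    exact h3
  -- combine
  apply Finset.sup'_le
  intro x _
  have hass' : Finset.univ.sup' Finset.univ_nonempty (r x) - r x (π x)
      ≤ L₁ * (Finset.univ.sup' Finset.univ_nonempty (f x) - f x (π x)) := by
    have h := hass x (π x)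
    rw [one_div, inv_mul_le_iff₀ hL] at h
    linarith [h]
  have hdsum := hsum x
  have hchain : (T:ℝ) * (Finset.univ.sup' Finset.univ_nonempty (f x) - f x (π x))
      ≤ 2 * β T * (Real.sqrt T * S) := by
    refine le_trans hdsum ?_
    have : 0 ≤ 2 * β T := by linarith
    exact mul_le_mul_of_nonneg_left hCS this
  have hfinal : Finset.univ.sup' Finset.univ_nonempty (f x) - f x (π x)
      ≤ 2 * β T / Real.sqrt T * S := by
    have hTsq : Real.sqrt T * Real.sqrt T = (T:ℝ) := Real.mul_self_sqrt (le_of_lt hTpos)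
    rw [div_mul_eq_mul_div, le_div_iff₀ hsqTpos, ← mul_le_mul_iff_left₀ hsqTpos]
    calc (Finset.univ.sup' Finset.univ_nonempty (f x) - f x (π x)) * Real.sqrt T * Real.sqrt T
        = (T:ℝ) * (Finset.univ.sup' Finset.univ_nonempty (f x) - f x (π x)) := by
          rw [mul_assoc, hTsq]; ring
      _ ≤ 2 * β T * (Real.sqrt T * S) := hchain
      _ = 2 * β T * S * Real.sqrt T := by ring
  calc Finset.univ.sup' Finset.univ_nonempty (r x) - r x (π x)
      ≤ L₁ * (Finset.univ.sup' Finset.univ_nonempty (f x) - f x (π x)) := hass'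
    _ ≤ L₁ * (2 * β T / Real.sqrt T * S) :=
        mul_le_mul_of_nonneg_left hfinal (le_of_lt hL)
    _ = (2 * L₁ * β T / Real.sqrt T) * S := by ring
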